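/- If T is a subnormal bounded operator on a Hilbert space H, then the closure of the range of the self-adjoint commutator [T*, T] = T*T − TT* is invariant under T*. -/

import Mathlib

open ContinuousLinearMap ComplexConjugate
open scoped InnerProductSpace

universe v

/-- A bounded operator on a complex Hilbert space is *subnormal* if it admits a normal
extension: there are a complex Hilbert space `K`, an isometric linear embedding `e : H → K`
and a normal operator `N` on `K` such that `N ∘ e = e ∘ T` (so the image of `H` is
invariant under `N` and `N` restricts to `T` there). -/
def Subnormal {H : Type*} [NormedAddCommGroup H] [InnerProductSpace ℂ H] [CompleteSpace H]
    (T : H →L[ℂ] H) : Prop :=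
  ∃ (K : Type v) (_ : NormedAddCommGroup K) (_ : InnerProductSpace ℂ K) (_ : CompleteSpace K)
    (e : H →ₗᵢ[ℂ] K) (N : K →L[ℂ] K),
      adjoint N ∘L N = N ∘L adjoint N ∧ ∀ x : H, N (e x) = e (T x)

lemma pos_inner_self_zero {E : Type*} [NormedAddCommGroup E] [InnerProductSpace ℂ E]
    [CompleteSpace E] {D : E →L[ℂ] E} (hsa : adjoint D = D)
    (hpos : ∀ z : E, 0 ≤ (⟪D z, z⟫_ℂ).re) {x : E} (hx : (⟪D x, x⟫_ℂ).re = 0) :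
    D x = 0 := by
  have hsym : ∀ u v : E, ⟪D u, v⟫_ℂ = ⟪u, D v⟫_ℂ := by
    intro u v
    conv_lhs => rw [← hsa]
    exact adjoint_inner_left D v u
  have hre : ∀ y : E, (⟪D x, y⟫_ℂ).re = 0 := by
    intro y
    set a : ℝ := (⟪D y, y⟫_ℂ).re with ha_def
    set b : ℝ := (⟪D x, y⟫_ℂ).re with hb_def
    have ha : 0 ≤ a := hpos y
    have key : ∀ t : ℝ, 0 ≤ t ^ 2 * a + 2 * t * b := by
      intro t
      have h0 := hpos (x + (t : ℂ) • y)
      have hexp : ⟪D (x + (t : ℂ) • y), x + (t : ℂ) • y⟫_ℂ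
          = ⟪D x, x⟫_ℂ + (t : ℂ) * ⟪D x, y⟫_ℂ + (t : ℂ) * ⟪D y, x⟫_ℂ
            + (t : ℂ) * (t : ℂ) * ⟪D y, y⟫_ℂ := by
        simp only [map_add, map_smul, inner_add_left, inner_add_right, inner_smul_left,
          inner_smul_right, Complex.conj_ofReal]
        ring
      have hconj : ⟪D y, x⟫_ℂ = conj ⟪D x, y⟫_ℂ := by
        rw [hsym y x, inner_conj_symm]
      rw [hexp, hconj] at h0
      simp only [Complex.add_re, Complex.mul_re, Complex.mul_im, Complex.ofReal_re,
        Complex.ofReal_im, Complex.conj_re, Complex.conj_im] at h0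
      nlinarith [h0, hx]
    have hpos1 : (0:ℝ) < a + 1 := by linarith
    have hb2 : b ^ 2 ≤ 0 := by
      have k := key (-(b / (a + 1)))
      have e : (-(b / (a + 1))) * (a + 1) = -b := by field_simp
      nlinarith [k, e, sq_nonneg b, mul_pos hpos1 hpos1]
    nlinarith [sq_nonneg b]
  have hall : ∀ y : E, ⟪D x, y⟫_ℂ = 0 := by
    intro y
    have h1 := hre y
    have h2 := hre (Complex.I • y)
    rw [inner_smul_right] at h2
    simp only [Complex.mul_re, Complex.I_re, Complex.I_im, zero_mul, one_mul,
      zero_sub, neg_eq_zero] at h2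
    apply Complex.ext <;> simp [h1, h2]
  refine ext_inner_right ℂ fun v => ?_
  rw [hall v, inner_zero_left]


lemma inner_self_re_c {E : Type*} [NormedAddCommGroup E] [InnerProductSpace ℂ E] (x : E) :
    (⟪x, x⟫_ℂ).re = ‖x‖ ^ 2 := inner_self_eq_norm_sq (𝕜 := ℂ) x

lemma norm_sub_sq_c {E : Type*} [NormedAddCommGroup E] [InnerProductSpace ℂ E] (x y : E) :
    ‖x - y‖ ^ 2 = ‖x‖ ^ 2 - 2 * (⟪x, y⟫_ℂ).re + ‖y‖ ^ 2 := norm_sub_sq (𝕜 := ℂ) x y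

lemma norm_eq_of_sq_eq {a b : ℝ} (ha : 0 ≤ a) (hb : 0 ≤ b) (h : a ^ 2 = b ^ 2) : a = b := by
  nlinarith [sq_nonneg (a - b), sq_nonneg (a + b)]

set_option maxHeartbeats 1000000 in
theorem stmt_15 {H : Type*} [NormedAddCommGroup H] [InnerProductSpace ℂ H]
    [CompleteSpace H] (T : H →L[ℂ] H) (hT : Subnormal T) :
    Submodule.map ((adjoint T : H →L[ℂ] H) : H →ₗ[ℂ] H)
        ((LinearMap.range ((adjoint T ∘L T - T ∘L adjoint T : H →L[ℂ] H) : H →ₗ[ℂ] H)).topologicalClosure) ≤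
      (LinearMap.range ((adjoint T ∘L T - T ∘L adjoint T : H →L[ℂ] H) : H →ₗ[ℂ] H)).topologicalClosure := by
  obtain ⟨K, _, _, _, e, N, hN, hNe⟩ := hT
  set D : H →L[ℂ] H := adjoint T ∘L T - T ∘L adjoint T with hD
  have fact1 : ∀ z y : H, ⟪e (adjoint T z), e y⟫_ℂ = ⟪adjoint N (e z), e y⟫_ℂ := by
    intro z y
    rw [e.inner_map_map, adjoint_inner_left, adjoint_inner_left, hNe, e.inner_map_map]
  have hcomm : ∀ v : K, adjoint N (N v) = N (adjoint N v) := by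
    intro v
    have := congrArg (fun f : K →L[ℂ] K => f v) hN
    simpa using this
  have normN : ∀ v : K, ‖adjoint N v‖ = ‖N v‖ := by
    intro v
    have h1 : (⟪adjoint N v, adjoint N v⟫_ℂ) = ⟪N v, N v⟫_ℂ := by
      rw [adjoint_inner_left, ← hcomm, adjoint_inner_right]
    have h2 := congrArg Complex.re h1
    rw [inner_self_re_c, inner_self_re_c] at h2
    exact norm_eq_of_sq_eq (norm_nonneg _) (norm_nonneg _) h2
  have normT : ∀ z : H, ‖T z‖ = ‖N (e z)‖ := fun z => by rw [hNe]; exact (e.norm_map _).symm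
  have fact2 : ∀ z : H, ‖adjoint T z‖ ≤ ‖T z‖ := by
    intro z
    have h1 : ‖adjoint T z‖ ^ 2 ≤ ‖T z‖ * ‖adjoint T z‖ := by
      have h2 : ‖adjoint T z‖ ^ 2 = (⟪adjoint N (e z), e (adjoint T z)⟫_ℂ).re := by
        rw [← fact1 z (adjoint T z), inner_self_re_c, e.norm_map]
      have h3 : (⟪adjoint N (e z), e (adjoint T z)⟫_ℂ).re
          ≤ ‖adjoint N (e z)‖ * ‖e (adjoint T z)‖ := by
        calc (⟪adjoint N (e z), e (adjoint T z)⟫_ℂ).re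
            ≤ ‖(⟪adjoint N (e z), e (adjoint T z)⟫_ℂ)‖ := Complex.re_le_norm _
          _ ≤ ‖adjoint N (e z)‖ * ‖e (adjoint T z)‖ := norm_inner_le_norm _ _
      rw [h2]
      calc (⟪adjoint N (e z), e (adjoint T z)⟫_ℂ).re
          ≤ ‖adjoint N (e z)‖ * ‖e (adjoint T z)‖ := h3
        _ = ‖T z‖ * ‖adjoint T z‖ := by rw [normN, ← normT, e.norm_map]
    rcases eq_or_lt_of_le (norm_nonneg (adjoint T z)) with h | h
    · rw [← h]; exact norm_nonneg _
    · have := le_of_mul_le_mul_right (by nlinarith [h1] : ‖adjoint T z‖ * ‖adjoint T z‖ ≤ ‖T z‖ * ‖adjoint T z‖) h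
      exact this
  have hDsa : adjoint D = D := by
    rw [hD, map_sub, adjoint_comp, adjoint_comp, adjoint_adjoint]
  have hDinner : ∀ z : H, (⟪D z, z⟫_ℂ).re = ‖T z‖ ^ 2 - ‖adjoint T z‖ ^ 2 := by
    intro z
    have h1 : ⟪(adjoint T) (T z), z⟫_ℂ = ⟪T z, T z⟫_ℂ := adjoint_inner_left T z (T z)
    have h2 : ⟪T ((adjoint T) z), z⟫_ℂ = ⟪(adjoint T) z, (adjoint T) z⟫_ℂ :=
      (adjoint_inner_right T ((adjoint T) z) z).symm
    rw [hD]
    simp only [sub_apply, comp_apply, inner_sub_left, h1, h2, Complex.sub_re,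
      inner_self_re_c]
  have hDpos : ∀ z : H, 0 ≤ (⟪D z, z⟫_ℂ).re := by
    intro z
    rw [hDinner]
    have := fact2 z
    nlinarith [norm_nonneg (adjoint T z)]
  have fact4 : ∀ z : H, D z = 0 → adjoint N (e z) = e (adjoint T z) := by
    intro z hz
    have hnorm : ‖T z‖ = ‖adjoint T z‖ := by
      have h0 : (⟪D z, z⟫_ℂ).re = 0 := by rw [hz]; simp
      rw [hDinner] at h0
      exact norm_eq_of_sq_eq (norm_nonneg _) (norm_nonneg _) (by linarith)
    have hsq : ‖adjoint N (e z) - e (adjoint T z)‖ ^ 2 = 0 := by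
      rw [norm_sub_sq_c]
      have hr : (⟪adjoint N (e z), e (adjoint T z)⟫_ℂ).re = ‖adjoint T z‖ ^ 2 := by
        rw [← fact1 z (adjoint T z), inner_self_re_c, e.norm_map]
      rw [hr, normN, ← normT, e.norm_map, hnorm]
      ring
    have := (pow_eq_zero_iff two_ne_zero).mp hsq
    rw [norm_eq_zero] at this
    exact sub_eq_zero.mp this
  have fact5 : ∀ z w : H, adjoint N (e z) = e w → D z = 0 := by
    intro z w h
    have hw : w = adjoint T z := by
      refine ext_inner_right ℂ fun v => ?_
      have h1 := fact1 z v
      rw [h, e.inner_map_map, e.inner_map_map] at h1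
      exact h1.symm
    have hnorm : ‖adjoint T z‖ = ‖T z‖ := by
      rw [← e.norm_map (adjoint T z), ← hw, ← h, normN, ← normT]
    apply pos_inner_self_zero hDsa hDpos
    rw [hDinner, hnorm, sub_self]
  have hker : ∀ x : H, D x = 0 → D (T x) = 0 := by
    intro x hx
    have h4 := fact4 x hx
    have hmem : adjoint N (e (T x)) = e (T (adjoint T x)) := by
      rw [← hNe, hcomm, h4, hNe]
    exact fact5 (T x) (T (adjoint T x)) hmem
  rintro _ ⟨y, hy, rfl⟩
  have hy' : y ∈ (LinearMap.range (D : H →ₗ[ℂ] H))ᗮᗮ := by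
    rw [Submodule.orthogonal_orthogonal_eq_closure]; exact hy
  rw [← Submodule.orthogonal_orthogonal_eq_closure, Submodule.mem_orthogonal]
  intro u hu
  have hu0 : D u = 0 := by
    apply pos_inner_self_zero hDsa hDpos
    have h0 : ⟪D u, u⟫_ℂ = 0 :=
      (Submodule.mem_orthogonal _ u).mp hu (D u) (LinearMap.mem_range_self _ u)
    rw [h0]; simp
  have hTu : D (T u) = 0 := hker u hu0
  rw [ContinuousLinearMap.coe_coe, adjoint_inner_right]
  apply (Submodule.mem_orthogonal _ _).mp hy' (T u)
  rw [Submodule.mem_orthogonal]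
  rintro _ ⟨v, rfl⟩
  have : ⟪D v, T u⟫_ℂ = ⟪v, D (T u)⟫_ℂ := by
    conv_lhs => rw [← hDsa]
    exact adjoint_inner_left D (T u) v
  rw [ContinuousLinearMap.coe_coe, this, hTu, inner_zero_right]
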